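/- Let F be an infinite field, n ≥ 2, and consider the differential d^1_{n,1}: H_1((F*)^n, ℤ) → H_1((F*)^{n−1} × GL_1(F), ℤ) given on H_1((F*)^n) ≅ (F*)^n by (a_1, …, a_n) ↦ Σ_{i=1}^n (−1)^{i+1}(a_1, …, â_i, …, a_n, a_i) composed with the identification. Concretely, identifying both sides with (F*)^n, the map sends (a_1,…,a_n) to the alternating sum of the permuted tuples. Then the kernel of d^1_{n,1} is isomorphic to (F*)^{⌊n/2⌋}, generated by elements of the form (a_1, a_1, a_2, a_2, …, a_j, a_j) if n = 2j, and (a_1, 1, a_2, 1, …, a_j, 1, Π_{i=1}^j a_i^{−1}) if n = 2j + 1. -/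

import Mathlib

noncomputable section

variable (F : Type) [Field F]

/-- The map `α_i : (F*)^n → (F*)^n`, `(a_1,…,a_n) ↦ (a_1,…,â_i,…,a_n,a_i)`, moving the
`i`-th coordinate to the last position. -/
def alpha (m : ℕ) (i : Fin (m + 1)) (a : Fin (m + 1) → Fˣ) : Fin (m + 1) → Fˣ :=
  Fin.snoc (a ∘ Fin.succAbove i) (a i)

/-- The differential `d¹_{n,1} : H₁((F*)^n) → H₁((F*)^n)`, the alternating sum
`∑_{i=1}^n (−1)^{i+1} α_i` (written multiplicatively). -/
def dOne (m : ℕ) (a : Fin (m + 1) → Fˣ) : Fin (m + 1) → Fˣ :=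
  ∏ i : Fin (m + 1), (alpha F m i a) ^ ((-1 : ℤ) ^ ((i : ℕ) + 1))

variable {F}

theorem aux_signsum (N : ℕ) : ∑ j ∈ Finset.range N, (-1:ℤ)^(j+1) = if Even N then 0 else -1 := by
  induction N with
  | zero => simp
  | succ n ih =>
      rw [Finset.sum_range_succ, ih]
      rcases Nat.even_or_odd n with h | h
      · rw [if_pos h, if_neg (by simp [Nat.even_add_one, h]),
          Odd.neg_one_pow (by simp [Nat.odd_iff, Nat.even_iff.mp h, Nat.add_mod])]
        ring
      · rw [if_neg (Nat.not_even_iff_odd.mpr h),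
          if_pos (by simpa [Nat.even_add_one] using Nat.not_even_iff_odd.mpr h),
          Even.neg_one_pow (by simpa [Nat.even_add_one] using h)]
        ring

theorem aux_prod_zpow_sum {ι : Type*} (x : Fˣ) (s : Finset ι) (e : ι → ℤ) :
    ∏ i ∈ s, x ^ e i = x ^ (∑ i ∈ s, e i) := by
  induction s using Finset.cons_induction with
  | empty => simp
  | cons a s ha ih => rw [Finset.prod_cons, Finset.sum_cons, ih, zpow_add]

theorem aux_sum_if_le (m : ℕ) (k : Fin m) :
    ∑ i : Fin (m+1), (if k.castSucc < i then (0:ℤ) else (-1:ℤ)^((i:ℕ)+1)) =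
      if Even ((k:ℕ)+1) then 0 else -1 := by
  simp only [Fin.lt_def, Fin.coe_castSucc]
  rw [Fin.sum_univ_eq_sum_range (fun j => if (k:ℕ) < j then (0:ℤ) else (-1:ℤ)^(j+1))]
  rw [← Finset.sum_subset (Finset.range_subset_range.mpr (by omega : (k:ℕ)+1 ≤ m+1)), ← aux_signsum]
  · exact Finset.sum_congr rfl (fun j hj => by
      rw [if_neg]; simpa using Nat.lt_succ_iff.mp (Finset.mem_range.mp hj))
  · intro j hj hj2
    rw [if_pos]; simp at hj hj2 ⊢; omega

theorem aux_dOne_last (m : ℕ) (a : Fin (m+1) → Fˣ) :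
    dOne F m a (Fin.last m) = ∏ i : Fin (m+1), a i ^ ((-1:ℤ)^((i:ℕ)+1)) := by
  simp [dOne, alpha]

theorem aux_dOne_castSucc (m : ℕ) (a : Fin (m+1) → Fˣ) (k : Fin m) :
    dOne F m a k.castSucc =
      a k.castSucc ^ ((if Even (m+1) then (0:ℤ) else -1) - (if Even ((k:ℕ)+1) then 0 else -1)) *
        a k.succ ^ (if Even ((k:ℕ)+1) then (0:ℤ) else -1) := by
  have h1 : dOne F m a k.castSucc
      = ∏ i : Fin (m+1), (if k.castSucc < i then a k.castSucc else a k.succ) ^ ((-1:ℤ)^((i:ℕ)+1)) := by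
    simp only [dOne, Finset.prod_apply, Pi.pow_apply]
    refine Finset.prod_congr rfl fun i _ => ?_
    have : alpha F m i a k.castSucc = a (i.succAbove k) := by simp [alpha]
    rw [this]
    congr 1
    show a (if k.castSucc < i then k.castSucc else k.succ) = _
    split <;> rfl
  rw [h1]
  have h2 : ∀ i : Fin (m+1),
      (if k.castSucc < i then a k.castSucc else a k.succ) ^ ((-1:ℤ)^((i:ℕ)+1))
        = (if k.castSucc < i then a k.castSucc ^ ((-1:ℤ)^((i:ℕ)+1)) else a k.succ ^ ((-1:ℤ)^((i:ℕ)+1))) := by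
    intro i; split <;> rfl
  rw [Finset.prod_congr rfl fun i _ => h2 i, Finset.prod_ite, aux_prod_zpow_sum, aux_prod_zpow_sum]
  congr 1
  · congr 1
    rw [Finset.sum_filter]
    have := aux_sum_if_le m k
    have htot : ∑ i : Fin (m+1), (-1:ℤ)^((i:ℕ)+1) = if Even (m+1) then 0 else -1 := by
      rw [Fin.sum_univ_eq_sum_range (fun j => (-1:ℤ)^(j+1)), aux_signsum]
    have hsplit : (∑ i : Fin (m+1), if k.castSucc < i then (-1:ℤ)^((i:ℕ)+1) else 0)
        + (∑ i : Fin (m+1), if k.castSucc < i then (0:ℤ) else (-1:ℤ)^((i:ℕ)+1))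
        = ∑ i : Fin (m+1), (-1:ℤ)^((i:ℕ)+1) := by
      rw [← Finset.sum_add_distrib]
      exact Finset.sum_congr rfl fun i _ => by split <;> ring
    omega
  · congr 1
    rw [Finset.sum_filter, ← aux_sum_if_le m k]
    exact Finset.sum_congr rfl fun i _ => by by_cases h : k.castSucc < i <;> simp [h]

theorem aux_prod_pair {M : Type*} [CommMonoid M] (g : ℕ → M) (J : ℕ) :
    ∏ j ∈ Finset.range (2*J), g j = ∏ t ∈ Finset.range J, (g (2*t) * g (2*t+1)) := by
  induction J with
  | zero => simp
  | succ J ih =>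
      rw [show 2*(J+1) = (2*J+1)+1 from by ring, Finset.prod_range_succ, Finset.prod_range_succ,
        ih, Finset.prod_range_succ, mul_assoc]

theorem aux_even_iff (m : ℕ) (he : Even (m+1)) (a : Fin (m+1) → Fˣ) :
    dOne F m a = 1 ↔ ∀ i j : Fin (m+1), (i : ℕ) / 2 = (j : ℕ) / 2 → a i = a j := by
  constructor
  · intro H
    have key : ∀ k : Fin m, (k:ℕ) % 2 = 0 → a k.castSucc = a k.succ := by
      intro k hk
      have h := congrFun H k.castSucc
      rw [aux_dOne_castSucc, if_pos he,
        if_neg (by simp [Nat.even_add_one, Nat.even_iff, hk]), Pi.one_apply] at h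
      norm_num at h
      exact mul_inv_eq_one.mp h
    have gen : ∀ i j : Fin (m+1), (i:ℕ) < (j:ℕ) → (i : ℕ) / 2 = (j : ℕ) / 2 → a i = a j := by
      intro i j hlt hij
      have h1 : (j:ℕ) = (i:ℕ)+1 := by omega
      have h2 : (i:ℕ) % 2 = 0 := by omega
      have hm : (i:ℕ) < m := by have := j.isLt; omega
      have e1 : (Fin.castSucc ⟨(i:ℕ), hm⟩) = i := Fin.ext rfl
      have e2 : (Fin.succ ⟨(i:ℕ), hm⟩) = j := Fin.ext (by simp [h1])
      rw [← e1, ← e2]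
      exact key _ h2
    intro i j hij
    rcases Nat.lt_trichotomy (i:ℕ) (j:ℕ) with h|h|h
    · exact gen i j h hij
    · exact congrArg a (Fin.ext h)
    · exact (gen j i h hij.symm).symm
  · intro P
    funext k'
    induction k' using Fin.lastCases with
    | last =>
        rw [aux_dOne_last, Pi.one_apply]
        obtain ⟨J, hJ⟩ := he
        set g : ℕ → Fˣ := fun j => if h : j < m+1 then a ⟨j, h⟩ else 1 with hg
        have hconv : ∏ i : Fin (m+1), a i ^ ((-1:ℤ)^((i:ℕ)+1))
            = ∏ j ∈ Finset.range (m+1), g j ^ ((-1:ℤ)^(j+1)) := by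
          rw [← Fin.prod_univ_eq_prod_range (fun j => g j ^ ((-1:ℤ)^(j+1)))]
          exact Finset.prod_congr rfl fun i _ => by rw [hg]; simp; intro h; have := i.isLt; omega
        rw [hconv, show m+1 = 2*J from by omega, aux_prod_pair (fun j => g j ^ ((-1:ℤ)^(j+1))) J]
        refine Finset.prod_eq_one fun t ht => ?_
        have h2t : 2*t+1 < m+1 := by simp at ht; omega
        have hgg : g (2*t) = g (2*t+1) := by
          rw [hg]; dsimp only; rw [dif_pos (by omega : 2*t < m+1), dif_pos h2t]
          exact P _ _ (by simp; omega)
        have hodd : ((-1:ℤ)^(2*t+1)) = -1 := Odd.neg_one_pow ⟨t, by ring⟩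
        have heven : ((-1:ℤ)^(2*t+1+1)) = 1 := Even.neg_one_pow ⟨t+1, by ring⟩
        rw [hgg, hodd, heven, zpow_neg_one, zpow_one, inv_mul_cancel]
    | cast k =>
        rw [aux_dOne_castSucc, if_pos he, Pi.one_apply]
        rcases Nat.even_or_odd ((k:ℕ)+1) with hk | hk
        · rw [if_pos hk]; norm_num
        · rw [if_neg (Nat.not_even_iff_odd.mpr hk)]
          have : a k.castSucc = a k.succ :=
            P _ _ (by have := Nat.odd_iff.mp hk; simp [Fin.val_succ]; omega)
          rw [this]; norm_num

theorem aux_inv_trick (m : ℕ) (a : Fin (m+1) → Fˣ)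
    (h1 : ∀ k : Fin (m+1), (k:ℕ) % 2 = 1 → a k = 1) :
    ∏ i : Fin (m+1), a i ^ ((-1:ℤ)^((i:ℕ)+1)) = (∏ i, a i)⁻¹ := by
  refine eq_inv_of_mul_eq_one_right ?_
  rw [← Finset.prod_mul_distrib]
  refine Finset.prod_eq_one fun i _ => ?_
  rcases Nat.even_or_odd (i:ℕ) with h | h
  · rw [Odd.neg_one_pow h.add_one, zpow_neg_one]; simp
  · rw [h1 i (Nat.odd_iff.mp h)]; simp

theorem aux_odd_iff (m : ℕ) (ho : Odd (m+1)) (a : Fin (m+1) → Fˣ) :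
    dOne F m a = 1 ↔ ((∀ k : Fin (m + 1), (k : ℕ) % 2 = 1 → a k = 1) ∧ ∏ k, a k = 1) := by
  have hne : ¬ Even (m+1) := Nat.not_even_iff_odd.mpr ho
  have hm2 : m % 2 = 0 := by have := Nat.odd_iff.mp ho; omega
  constructor
  · intro H
    have h1 : ∀ k : Fin (m + 1), (k : ℕ) % 2 = 1 → a k = 1 := by
      intro k hk
      have hlt : (k:ℕ) < m := by have := k.isLt; omega
      have h := congrFun H (Fin.castSucc ⟨(k:ℕ), hlt⟩)
      rw [aux_dOne_castSucc, if_neg hne,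
        if_pos (by simpa [Nat.even_add_one, Nat.even_iff] using hk), Pi.one_apply] at h
      norm_num at h
      exact h
    refine ⟨h1, ?_⟩
    have h := congrFun H (Fin.last m)
    rw [aux_dOne_last, Pi.one_apply, aux_inv_trick m a h1, inv_eq_one] at h
    exact h
  · rintro ⟨h1, h2⟩
    funext k'
    induction k' using Fin.lastCases with
    | last => rw [aux_dOne_last, Pi.one_apply, aux_inv_trick m a h1, h2, inv_one]
    | cast k =>
        rw [aux_dOne_castSucc, if_neg hne, Pi.one_apply]
        rcases Nat.even_or_odd ((k:ℕ)+1) with hk | hk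
        · rw [if_pos hk]
          have : a k.castSucc = 1 := h1 _ (by have := Nat.even_iff.mp hk; simpa using by omega)
          rw [this]; norm_num
        · rw [if_neg (Nat.not_even_iff_odd.mpr hk)]
          have : a k.succ = 1 := h1 _ (by have := Nat.odd_iff.mp hk; simpa [Fin.val_succ] using this)
          rw [this]; norm_num

theorem aux_prod_even_entries (m J : ℕ) (hm : m = 2*J) (a : Fin (m+1) → Fˣ)
    (h1 : ∀ k : Fin (m+1), (k:ℕ) % 2 = 1 → a k = 1) :
    ∏ k : Fin m, a k.castSucc = ∏ t : Fin J, a ⟨2*(t:ℕ), by have := t.2; omega⟩ := by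
  subst hm
  set g : ℕ → Fˣ := fun j => if h : j < 2*J then a ⟨j, by omega⟩ else 1 with hg
  have h0 : ∏ k : Fin (2*J), a k.castSucc = ∏ j ∈ Finset.range (2*J), g j := by
    rw [← Fin.prod_univ_eq_prod_range g (2*J)]
    refine Finset.prod_congr rfl fun k _ => ?_
    rw [hg]; dsimp only; rw [dif_pos k.isLt]
    exact congrArg a (Fin.ext rfl)
  rw [h0, aux_prod_pair g J, ← Fin.prod_univ_eq_prod_range (fun t => g (2*t) * g (2*t+1)) J]
  refine Finset.prod_congr rfl fun t _ => ?_
  have ht := t.2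
  have hg1 : g (2*(t:ℕ)) = a ⟨2*(t:ℕ), by omega⟩ := by
    rw [hg]; dsimp only; rw [dif_pos (by omega)]
  have hg2 : g (2*(t:ℕ)+1) = 1 := by
    rw [hg]; dsimp only; rw [dif_pos (by omega)]
    exact h1 _ (by simp [Nat.mul_add_mod])
  rw [hg1, hg2, mul_one]

theorem aux_exists_even (m : ℕ) (he : Even (m+1)) :
    ∃ e : (Fin ((m + 1) / 2) → Fˣ) →* (Fin (m + 1) → Fˣ),
      Function.Injective e ∧ Set.range e = {a | dOne F m a = 1} := by
  obtain ⟨J', hJ'⟩ := id he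
  refine ⟨MonoidHom.mk' (fun b k => b ⟨(k:ℕ)/2, by have := k.2; omega⟩) (fun b c => rfl), ?_, ?_⟩
  · intro b c h
    funext t
    have ht := t.2
    have h2 := congrFun h ⟨2*(t:ℕ), by omega⟩
    simp only [MonoidHom.mk'_apply] at h2
    simpa using h2
  · ext a
    simp only [Set.mem_range, Set.mem_setOf_eq]
    rw [aux_even_iff m he a]
    constructor
    · rintro ⟨b, rfl⟩ i j hij
      simp only [MonoidHom.mk'_apply]
      congr 1
      exact Fin.ext hij
    · intro P
      refine ⟨fun t => a ⟨2*(t:ℕ), by have := t.2; omega⟩, funext fun k => ?_⟩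
      simp only [MonoidHom.mk'_apply]
      exact P _ _ (by simp)

theorem aux_exists_odd (m : ℕ) (ho : Odd (m+1)) :
    ∃ e : (Fin ((m + 1) / 2) → Fˣ) →* (Fin (m + 1) → Fˣ),
      Function.Injective e ∧ Set.range e = {a | dOne F m a = 1} := by
  obtain ⟨J', hJ'⟩ := id ho
  have hJ : m = 2 * ((m+1)/2) := by omega
  set f : (Fin ((m+1)/2) → Fˣ) → (Fin (m+1) → Fˣ) := fun b k =>
    if hk : (k:ℕ) < m then
      (if (k:ℕ) % 2 = 0 then b ⟨(k:ℕ)/2, by omega⟩ else 1)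
    else (∏ t, b t)⁻¹ with hf
  have hmul : ∀ b c, f (b * c) = f b * f c := by
    intro b c
    funext k
    simp only [hf, Pi.mul_apply]
    by_cases hk : (k:ℕ) < m
    · rw [dif_pos hk, dif_pos hk, dif_pos hk]
      by_cases h2 : (k:ℕ) % 2 = 0
      · rw [if_pos h2, if_pos h2, if_pos h2]
      · rw [if_neg h2, if_neg h2, if_neg h2, one_mul]
    · rw [dif_neg hk, dif_neg hk, dif_neg hk, ← mul_inv]
      congr 1
      rw [← Finset.prod_mul_distrib]
  -- f b satisfies the odd-position condition
  have hodd1 : ∀ b, ∀ k : Fin (m+1), (k:ℕ) % 2 = 1 → f b k = 1 := by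
    intro b k hk
    have hkm : (k:ℕ) < m := by have := k.2; omega
    simp only [hf]
    rw [dif_pos hkm, if_neg (by omega)]
  -- even entries of f b
  have hfeven : ∀ b, ∀ t : Fin ((m+1)/2), f b ⟨2*(t:ℕ), by have := t.2; omega⟩ = b t := by
    intro b t
    have ht := t.2
    simp only [hf]
    rw [dif_pos (by omega), if_pos (by omega)]
    congr 1
    exact Fin.ext (by simp)
  refine ⟨MonoidHom.mk' f hmul, ?_, ?_⟩
  · intro b c h
    funext t
    have h2 := congrFun h ⟨2*(t:ℕ), by have := t.2; omega⟩
    simp only [MonoidHom.mk'_apply] at h2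
    rwa [hfeven b t, hfeven c t] at h2
  · ext a
    simp only [Set.mem_range, Set.mem_setOf_eq, MonoidHom.mk'_apply]
    rw [aux_odd_iff m ho a]
    constructor
    · rintro ⟨b, rfl⟩
      refine ⟨hodd1 b, ?_⟩
      rw [Fin.prod_univ_castSucc]
      have hlast : f b (Fin.last m) = (∏ t, b t)⁻¹ := by
        simp only [hf]
        rw [dif_neg (by simp)]
      have hcast : ∏ k : Fin m, f b k.castSucc = ∏ t, b t := by
        rw [aux_prod_even_entries m ((m+1)/2) hJ (f b) (hodd1 b)]
        exact Finset.prod_congr rfl fun t _ => hfeven b t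
      rw [hlast, hcast, mul_inv_cancel]
    · rintro ⟨h1, h2⟩
      refine ⟨fun t => a ⟨2*(t:ℕ), by have := t.2; omega⟩, funext fun k => ?_⟩
      simp only [hf]
      by_cases hk : (k:ℕ) < m
      · rw [dif_pos hk]
        by_cases h2k : (k:ℕ) % 2 = 0
        · rw [if_pos h2k]
          exact congrArg a (Fin.ext (by simp; omega))
        · rw [if_neg h2k]
          exact (h1 k (by omega)).symm
      · rw [dif_neg hk]
        have hkm : (k:ℕ) = m := by have := k.2; omega
        have hlast : a (Fin.last m) = a k := congrArg a (Fin.ext (by simp [hkm]))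
        have hcast : ∏ j : Fin m, a j.castSucc = ∏ t : Fin ((m+1)/2), a ⟨2*(t:ℕ), by have := t.2; omega⟩ :=
          aux_prod_even_entries m ((m+1)/2) hJ a h1
        rw [Fin.prod_univ_castSucc, hcast, hlast] at h2
        exact inv_eq_of_mul_eq_one_right h2

/-- For an infinite field `F` and `n = m + 1 ≥ 2`, the kernel of
`d¹_{n,1} : (F*)^n → (F*)^n` is the subgroup generated by the elements
`(a₁, a₁, …, a_j, a_j)` if `n = 2j`, and `(a₁, 1, …, a_j, 1, (a₁⋯a_j)⁻¹)` if
`n = 2j + 1`; in particular it is isomorphic to `(F*)^⌊n/2⌋`. -/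
theorem stmt_11 [Infinite F] (m : ℕ) (hm : 2 ≤ m + 1) :
    (Even (m + 1) → ∀ a : Fin (m + 1) → Fˣ,
      dOne F m a = 1 ↔
        ∀ i j : Fin (m + 1), (i : ℕ) / 2 = (j : ℕ) / 2 → a i = a j) ∧
    (Odd (m + 1) → ∀ a : Fin (m + 1) → Fˣ,
      dOne F m a = 1 ↔
        ((∀ k : Fin (m + 1), (k : ℕ) % 2 = 1 → a k = 1) ∧ ∏ k, a k = 1)) ∧
    ∃ e : (Fin ((m + 1) / 2) → Fˣ) →* (Fin (m + 1) → Fˣ),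
      Function.Injective e ∧ Set.range e = {a | dOne F m a = 1} := by
  refine ⟨fun he a => aux_even_iff m he a, fun ho a => aux_odd_iff m ho a, ?_⟩
  rcases Nat.even_or_odd (m + 1) with h | h
  · exact aux_exists_even m h
  · exact aux_exists_odd m h

end
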